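/- Let V be a finite vertex set of cardinality N and let E : V → V → ℕ → Prop be an availability relation such that there exist b ∈ ℕ and p > 0 with: for all u, v ∈ V and all θ ≥ b, E u v θ holds if and only if E u v (θ + p) holds. If there exists a temporal walk with waiting from s to t, then there exists a temporal walk with waiting from s to t of some length m ≤ N − 1 whose times τ₁ < ⋯ < τ_m satisfy τ_j ≤ b + p·j for every j; in particular its arrival time is at most b + p·N. -/
import Mathlib

/-- Reduce a time `x` by multiples of the period `p`, staying `≥ b` (so periodicity
applies) and `> L` (the previous time). -/
private def red (p b L x : ℕ) : ℕ :=
  if h : 0 < p ∧ b + p ≤ x ∧ L + p < x then red p b L (x - p) else x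
termination_by x
decreasing_by omega

private theorem red_le (p b L : ℕ) : ∀ x, red p b L x ≤ x := by
  intro x
  induction x using Nat.strong_induction_on with
  | _ x ih =>
    rw [red]
    split
    · rename_i h
      exact le_trans (ih (x - p) (by omega)) (by omega)
    · exact le_rfl

private theorem red_gt (p b L : ℕ) : ∀ x, L < x → L < red p b L x := by
  intro x
  induction x using Nat.strong_induction_on with
  | _ x ih =>
    intro h
    rw [red]
    split
    · rename_i hc
      exact ih (x - p) (by omega) (by omega)
    · exact h

private theorem red_bound (p b L : ℕ) (hp : 0 < p) : ∀ x, red p b L x ≤ max b L + p := by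
  intro x
  induction x using Nat.strong_induction_on with
  | _ x ih =>
    rw [red]
    split
    · rename_i hc
      exact ih (x - p) (by omega)
    · rename_i hc
      omega

private theorem red_E {V : Type*} (E : V → V → ℕ → Prop) (u w : V) (b p : ℕ)
    (hper : ∀ θ, b ≤ θ → (E u w θ ↔ E u w (θ + p))) (L : ℕ) :
    ∀ x, E u w x → E u w (red p b L x) := by
  intro x
  induction x using Nat.strong_induction_on with
  | _ x ih =>
    intro hx
    rw [red]
    split
    · rename_i hc
      refine ih (x - p) (by omega) ?_
      have h := hper (x - p) (by omega)
      have hxp : x - p + p = x := by omega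
      rw [hxp] at h
      exact h.mpr hx
    · exact hx

private theorem shorten {V : Type*} [Fintype V] (E : V → V → ℕ → Prop) :
    ∀ m : ℕ, ∀ (v : ℕ → V) (θ : ℕ → ℕ),
      (∀ j, 1 ≤ j → j < m → θ j < θ (j + 1)) →
      (∀ j, 1 ≤ j → j ≤ m → E (v (j - 1)) (v j) (θ j)) →
      ∃ m', m' ≤ Fintype.card V - 1 ∧ ∃ (v' : ℕ → V) (θ' : ℕ → ℕ),
        v' 0 = v 0 ∧ v' m' = v m ∧
        (∀ j, 1 ≤ j → j < m' → θ' j < θ' (j + 1)) ∧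
        (∀ j, 1 ≤ j → j ≤ m' → E (v' (j - 1)) (v' j) (θ' j)) := by
  intro m
  induction m using Nat.strong_induction_on with
  | _ m ih =>
    intro v θ hinc hE
    by_cases hm : m ≤ Fintype.card V - 1
    · exact ⟨m, hm, v, θ, rfl, rfl, hinc, hE⟩
    · have hcard : 0 < Fintype.card V := Fintype.card_pos_iff.mpr ⟨v 0⟩
      have hlt : Fintype.card V < Fintype.card (Fin (m + 1)) := by
        simp only [Fintype.card_fin]
        omega
      obtain ⟨a, c, hne, heq⟩ :=
        Fintype.exists_ne_map_eq_of_card_lt (fun j : Fin (m + 1) => v j) hlt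
      have key : ∃ i k : ℕ, i < k ∧ k ≤ m ∧ v i = v k := by
        rcases lt_or_gt_of_ne hne with h | h
        · exact ⟨a, c, h, Nat.lt_succ_iff.mp c.isLt, heq⟩
        · exact ⟨c, a, h, Nat.lt_succ_iff.mp a.isLt, heq.symm⟩
      obtain ⟨i, k, hik, hkm, hvik⟩ := key
      set d := k - i with hd
      set m' := m - d with hm'def
      have hd1 : 1 ≤ d := by omega
      have hm1 : 1 ≤ m := by omega
      have hm'lt : m' < m := by omega
      set v'' : ℕ → V := fun j => if j ≤ i then v j else v (j + d) with hv''
      set θ'' : ℕ → ℕ := fun j => if j ≤ i then θ j else θ (j + d) with hθ''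
      have chain : ∀ x y, 1 ≤ x → x < y → y ≤ m → θ x < θ y := by
        intro x y
        induction y with
        | zero => omega
        | succ y ihy =>
          intro h1 h2 h3
          rcases Nat.lt_or_ge x y with h | h
          · exact lt_trans (ihy h1 h (by omega)) (hinc y (by omega) (by omega))
          · have hxy : x = y := by omega
            subst hxy
            exact hinc x h1 (by omega)
      have hinc'' : ∀ j, 1 ≤ j → j < m' → θ'' j < θ'' (j + 1) := by
        intro j h1 h2
        simp only [hθ'']
        by_cases hj : j + 1 ≤ i
        · rw [if_pos (by omega : j ≤ i), if_pos hj]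
          exact hinc j h1 (by omega)
        · by_cases hj2 : j ≤ i
          · have hji : j = i := by omega
            rw [if_pos hj2, if_neg hj]
            have e : j + 1 + d = k + 1 := by omega
            rw [e]
            exact chain j (k + 1) h1 (by omega) (by omega)
          · rw [if_neg hj2, if_neg hj]
            have e : j + 1 + d = j + d + 1 := by omega
            rw [e]
            exact hinc (j + d) (by omega) (by omega)
      have hE'' : ∀ j, 1 ≤ j → j ≤ m' → E (v'' (j - 1)) (v'' j) (θ'' j) := by
        intro j h1 h2
        simp only [hv'', hθ'']
        by_cases hj : j ≤ i
        · rw [if_pos hj, if_pos (by omega : j - 1 ≤ i), if_pos hj]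
          exact hE j h1 (by omega)
        · by_cases hj2 : j - 1 ≤ i
          · rw [if_pos hj2, if_neg hj, if_neg hj]
            have e1 : j - 1 = i := by omega
            have e2 : j + d = k + 1 := by omega
            rw [e1, e2, hvik]
            have h3 := hE (k + 1) (by omega) (by omega)
            simpa using h3
          · rw [if_neg hj2, if_neg hj, if_neg hj]
            have e : j - 1 + d = j + d - 1 := by omega
            rw [e]
            exact hE (j + d) (by omega) (by omega)
      have hend : v'' m' = v m := by
        simp only [hv'']
        by_cases h : m' ≤ i
        · have h1 : m' = i := by omega
          have h2 : k = m := by omega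
          rw [if_pos h, h1, hvik, h2]
        · rw [if_neg h]
          congr 1
          omega
      have h0 : v'' 0 = v 0 := by
        simp only [hv'']
        rw [if_pos (Nat.zero_le i)]
      obtain ⟨m2, hm2, v2, θ2, h02, hend2, hinc2, hE2⟩ := ih m' hm'lt v'' θ'' hinc'' hE''
      exact ⟨m2, hm2, v2, θ2, by rw [h02, h0], by rw [hend2, hend], hinc2, hE2⟩

private theorem timered {V : Type*} (E : V → V → ℕ → Prop) (b p : ℕ) (hp : 0 < p)
    (hper : ∀ u w θ, b ≤ θ → (E u w θ ↔ E u w (θ + p)))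
    (m : ℕ) (v : ℕ → V) (θ : ℕ → ℕ)
    (hinc : ∀ j, 1 ≤ j → j < m → θ j < θ (j + 1))
    (hE : ∀ j, 1 ≤ j → j ≤ m → E (v (j - 1)) (v j) (θ j)) :
    ∃ τ : ℕ → ℕ,
      (∀ j, 1 ≤ j → j < m → τ j < τ (j + 1)) ∧
      (∀ j, 1 ≤ j → j ≤ m → E (v (j - 1)) (v j) (τ j)) ∧
      (∀ j, τ j ≤ b + p * j) := by
  let τ : ℕ → ℕ := fun n => Nat.rec 0 (fun j ih => red p b ih (θ (j + 1))) n
  have hτs : ∀ j, τ (j + 1) = red p b (τ j) (θ (j + 1)) := fun j => rfl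
  have hle : ∀ j, 1 ≤ j → τ j ≤ θ j := by
    intro j h1
    obtain ⟨k, rfl⟩ : ∃ k, j = k + 1 := ⟨j - 1, by omega⟩
    rw [hτs]
    exact red_le _ _ _ _
  have hbound : ∀ j, τ j ≤ b + p * j := by
    intro j
    induction j with
    | zero => exact Nat.zero_le _
    | succ j ihj =>
      rw [hτs]
      have h1 := red_bound p b (τ j) hp (θ (j + 1))
      have h2 : max b (τ j) ≤ b + p * j := by
        rcases max_cases b (τ j) with ⟨h, _⟩ | ⟨h, _⟩ <;> omega
      calc red p b (τ j) (θ (j + 1)) ≤ max b (τ j) + p := h1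
        _ ≤ b + p * j + p := by omega
        _ = b + p * (j + 1) := by ring
  refine ⟨τ, ?_, ?_, hbound⟩
  · intro j h1 h2
    rw [hτs]
    exact red_gt p b (τ j) (θ (j + 1)) (lt_of_le_of_lt (hle j h1) (hinc j h1 h2))
  · intro j h1 h2
    obtain ⟨k, rfl⟩ : ∃ k, j = k + 1 := ⟨j - 1, by omega⟩
    rw [hτs]
    exact red_E E _ _ b p (fun θ' hθ' => hper _ _ θ' hθ') (τ k) (θ (k + 1)) (hE (k + 1) h1 h2)

/-- On an ultimately periodic temporal graph (bound `b`, period `p > 0`), if a temporal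
walk with waiting from `s` to `t` exists, then one exists of length `m ≤ N − 1` whose
times satisfy `τ j ≤ b + p * j`; in particular its arrival time is at most `b + p * N`. -/
theorem stmt_11 {V : Type*} [Fintype V] (N : ℕ) (hN : N = Fintype.card V)
    (E : V → V → ℕ → Prop) (b p : ℕ) (hp : 0 < p)
    (hper : ∀ u v θ, b ≤ θ → (E u v θ ↔ E u v (θ + p)))
    (s t : V)
    (hwalk : ∃ (m : ℕ) (v : ℕ → V) (θ : ℕ → ℕ),
      v 0 = s ∧ v m = t ∧
      (∀ j, 1 ≤ j → j < m → θ j < θ (j + 1)) ∧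
      (∀ j, 1 ≤ j → j ≤ m → E (v (j - 1)) (v j) (θ j))) :
    ∃ (m : ℕ) (v : ℕ → V) (τ : ℕ → ℕ),
      m ≤ N - 1 ∧
      v 0 = s ∧ v m = t ∧
      (∀ j, 1 ≤ j → j < m → τ j < τ (j + 1)) ∧
      (∀ j, 1 ≤ j → j ≤ m → E (v (j - 1)) (v j) (τ j)) ∧
      (∀ j, 1 ≤ j → j ≤ m → τ j ≤ b + p * j) ∧
      (1 ≤ m → τ m ≤ b + p * N) := by
  obtain ⟨m, v, θ, hs, ht, hinc, hE⟩ := hwalk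
  obtain ⟨m', hm', v', θ', h0, hend, hinc', hE'⟩ := shorten E m v θ hinc hE
  obtain ⟨τ, hinc2, hE2, hbound⟩ := timered E b p hp hper m' v' θ' hinc' hE'
  have hcard : 0 < Fintype.card V := Fintype.card_pos_iff.mpr ⟨s⟩
  have hmN : m' ≤ N - 1 := by omega
  refine ⟨m', v', τ, hmN, by rw [h0, hs], by rw [hend, ht], hinc2, hE2, fun j _ _ => hbound j, ?_⟩
  intro _
  have h1 := hbound m'
  have h2 : p * m' ≤ p * N := Nat.mul_le_mul_left p (by omega)
  omega
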